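/- Let (X, σ) be a finite measure space and v : X → ℝ with |v| integrable, ∫ |v| dσ > 0. Over all measurable h : X → ℝ with h > 0 a.e. and ∫ h dσ = m (where m > 0), the infimum of ∫ v²/h dσ equals (1/m)(∫ |v| dσ)², and it is attained by h = m|v|/∫|v| dσ when v ≠ 0 a.e. -/

import Mathlib

open MeasureTheory Filter

private lemma cs_aux {X : Type*} [MeasurableSpace X] (σ : Measure X)
    (v : X → ℝ) (hvm : Measurable v)
    (h : X → ℝ) (hhm : Measurable h) (hhpos : ∀ᵐ x ∂σ, 0 < h x)
    (hhint : Integrable h σ) (hint2 : Integrable (fun x => v x ^ 2 / h x) σ) :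
    (∫ x, |v x| ∂σ) ^ 2 ≤ (∫ x, v x ^ 2 / h x ∂σ) * ∫ x, h x ∂σ := by
  set f : X → ℝ := fun x => Real.sqrt (v x ^ 2 / h x) with hf_def
  set g : X → ℝ := fun x => Real.sqrt (h x) with hg_def
  have hpq : Real.HolderConjugate 2 2 := ⟨by norm_num, by norm_num, by norm_num⟩
  have hf2 : (fun x => f x ^ 2) =ᵐ[σ] fun x => v x ^ 2 / h x := by
    filter_upwards [hhpos] with x hx
    exact Real.sq_sqrt (div_nonneg (sq_nonneg _) hx.le)
  have hg2 : (fun x => g x ^ 2) =ᵐ[σ] h := by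
    filter_upwards [hhpos] with x hx
    exact Real.sq_sqrt hx.le
  have hfmeas : Measurable f := (hvm.pow_const 2 |>.div hhm).sqrt
  have hgmeas : Measurable g := hhm.sqrt
  have hfmem : MemLp f 2 σ :=
    (memLp_two_iff_integrable_sq hfmeas.aestronglyMeasurable).2 (hint2.congr hf2.symm)
  have hgmem : MemLp g 2 σ :=
    (memLp_two_iff_integrable_sq hgmeas.aestronglyMeasurable).2 (hhint.congr hg2.symm)
  have h2 : (ENNReal.ofReal (2:ℝ)) = 2 := by norm_num
  have CS := integral_mul_le_Lp_mul_Lq_of_nonneg (μ := σ) hpq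
    (Filter.Eventually.of_forall fun x => Real.sqrt_nonneg _)
    (Filter.Eventually.of_forall fun x => Real.sqrt_nonneg _)
    (h2 ▸ hfmem) (h2 ▸ hgmem)
  have hfg : (fun x => f x * g x) =ᵐ[σ] fun x => |v x| := by
    filter_upwards [hhpos] with x hx
    simp only [hf_def, hg_def]
    rw [← Real.sqrt_mul (div_nonneg (sq_nonneg _) hx.le),
      div_mul_cancel₀ _ hx.ne', Real.sqrt_sq_eq_abs]
  have hrpow : ∀ (u : X → ℝ), (fun x => u x ^ (2:ℝ)) = fun x => u x ^ (2:ℕ) := by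
    intro u; funext x
    rw [show (2:ℝ) = ((2:ℕ):ℝ) by norm_num, Real.rpow_natCast]
  rw [integral_congr_ae hfg, hrpow f, hrpow g,
    integral_congr_ae hf2, integral_congr_ae hg2] at CS
  set A := ∫ x, v x ^ 2 / h x ∂σ
  set M := ∫ x, h x ∂σ
  have hA0 : 0 ≤ A := by
    apply integral_nonneg_of_ae
    filter_upwards [hhpos] with x hx
    exact div_nonneg (sq_nonneg _) hx.le
  have hM0 : 0 ≤ M := by
    apply integral_nonneg_of_ae
    filter_upwards [hhpos] with x hx
    exact hx.le
  have hI0 : 0 ≤ ∫ x, |v x| ∂σ := integral_nonneg fun x => abs_nonneg _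
  have hsq : ∀ t : ℝ, 0 ≤ t → (t ^ (1/2 : ℝ)) ^ 2 = t := by
    intro t ht
    rw [← Real.rpow_natCast (t ^ (1/2:ℝ)) 2, ← Real.rpow_mul ht]
    norm_num
  calc (∫ x, |v x| ∂σ) ^ 2 ≤ (A ^ (1/2:ℝ) * M ^ (1/2:ℝ)) ^ 2 :=
        pow_le_pow_left₀ hI0 CS 2
    _ = A * M := by rw [mul_pow, hsq A hA0, hsq M hM0]

/-- Over positive h of total mass m, the infimum of ∫ v²/h dσ equals
(1/m)(∫|v|)², attained by h = m|v|/∫|v| when v ≠ 0 a.e. -/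
theorem stmt_8 {X : Type*} [MeasurableSpace X] (σ : Measure X) [IsFiniteMeasure σ]
    (v : X → ℝ) (hvm : Measurable v)
    (hvint : Integrable (fun x => |v x|) σ)
    (hvpos : 0 < ∫ x, |v x| ∂σ)
    (m : ℝ) (hm : 0 < m) :
    IsGLB {r : ℝ | ∃ h : X → ℝ, Measurable h ∧ (∀ᵐ x ∂σ, 0 < h x) ∧
        Integrable h σ ∧ (∫ x, h x ∂σ) = m ∧
        Integrable (fun x => v x ^ 2 / h x) σ ∧ r = ∫ x, v x ^ 2 / h x ∂σ}
      ((1 / m) * (∫ x, |v x| ∂σ) ^ 2) ∧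
    ((∀ᵐ x ∂σ, v x ≠ 0) →
      (1 / m) * (∫ x, |v x| ∂σ) ^ 2 ∈
        {r : ℝ | ∃ h : X → ℝ, Measurable h ∧ (∀ᵐ x ∂σ, 0 < h x) ∧
          Integrable h σ ∧ (∫ x, h x ∂σ) = m ∧
          Integrable (fun x => v x ^ 2 / h x) σ ∧ r = ∫ x, v x ^ 2 / h x ∂σ}) := by
  set I := ∫ x, |v x| ∂σ with hI_def
  set S := {r : ℝ | ∃ h : X → ℝ, Measurable h ∧ (∀ᵐ x ∂σ, 0 < h x) ∧
        Integrable h σ ∧ (∫ x, h x ∂σ) = m ∧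
        Integrable (fun x => v x ^ 2 / h x) σ ∧ r = ∫ x, v x ^ 2 / h x ∂σ} with hS_def
  have hT : (0:ℝ) ≤ (σ Set.univ).toReal := ENNReal.toReal_nonneg
  -- lower bound
  have hlb : ∀ r ∈ S, (1 / m) * I ^ 2 ≤ r := by
    rintro r ⟨h, hhm, hhpos, hhint, hhmass, hint2, rfl⟩
    have key := cs_aux σ v hvm h hhm hhpos hhint hint2
    rw [hhmass] at key
    rw [div_mul_eq_mul_div, div_le_iff₀ hm, mul_comm]
    simpa using key
  -- value of the integral for the scaled function  c * (|v| + ε)  (ε ≥ 0 case handled per use)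
  -- membership for the ε-regularized profile
  have hmem : ∀ ε : ℝ, 0 < ε →
      ((I + ε * (σ Set.univ).toReal) / m * ∫ x, v x ^ 2 / (|v x| + ε) ∂σ) ∈ S := by
    intro ε hε
    set T := (σ Set.univ).toReal
    set Iε := I + ε * T with hIε_def
    have hIε : 0 < Iε := by positivity
    refine ⟨fun x => m / Iε * (|v x| + ε), (hvm.abs.add_const ε).const_mul _, ?_, ?_, ?_, ?_, ?_⟩
    · refine Eventually.of_forall fun x => ?_
      have : 0 < |v x| + ε := by positivity
      positivity
    · exact (hvint.add (integrable_const ε)).const_mul _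
    · rw [integral_const_mul, integral_add hvint (integrable_const ε), integral_const,
        smul_eq_mul, ← hI_def]
      have : I + T * ε = Iε := by rw [hIε_def]; ring
      rw [show I + σ.real Set.univ * ε = Iε from this, div_mul_cancel₀ _ hIε.ne']
    · have heq : (fun x => v x ^ 2 / (m / Iε * (|v x| + ε))) =
          fun x => Iε / m * (v x ^ 2 / (|v x| + ε)) := by
        funext x
        have hd : (0:ℝ) < |v x| + ε := by positivity
        field_simp
      rw [heq]
      refine Integrable.const_mul ?_ _
      refine hvint.mono ((hvm.pow_const 2).div (hvm.abs.add_const ε)).aestronglyMeasurable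
        (Eventually.of_forall fun x => ?_)
      have hd : (0:ℝ) < |v x| + ε := by positivity
      rw [Real.norm_eq_abs, Real.norm_eq_abs, abs_of_nonneg (div_nonneg (sq_nonneg _) hd.le),
        abs_abs, div_le_iff₀ hd]
      nlinarith [abs_nonneg (v x), sq_abs (v x)]
    · have heq : (fun x => v x ^ 2 / (m / Iε * (|v x| + ε))) =
          fun x => Iε / m * (v x ^ 2 / (|v x| + ε)) := by
        funext x
        have hd : (0:ℝ) < |v x| + ε := by positivity
        field_simp
      rw [heq, integral_const_mul]
  -- limit of the ε-values
  have hglb2 : ∀ b ∈ lowerBounds S, b ≤ (1 / m) * I ^ 2 := by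
    intro b hb
    set T := (σ Set.univ).toReal
    have hseq : Tendsto (fun n : ℕ => (1:ℝ) / (n + 1)) atTop (nhds 0) :=
      tendsto_one_div_add_atTop_nhds_zero_nat
    have hεpos : ∀ n : ℕ, (0:ℝ) < 1 / (n + 1) := fun n => by positivity
    -- dominated convergence for Jₙ := ∫ v² / (|v| + 1/(n+1))
    have hJ : Tendsto (fun n : ℕ => ∫ x, v x ^ 2 / (|v x| + 1 / (n + 1)) ∂σ)
        atTop (nhds I) := by
      rw [hI_def]
      refine tendsto_integral_of_dominated_convergence (fun x => |v x|) ?_ hvint ?_ ?_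
      · intro n
        exact ((hvm.pow_const 2).div (hvm.abs.add_const _)).aestronglyMeasurable
      · intro n
        refine Eventually.of_forall fun x => ?_
        have hd : (0:ℝ) < |v x| + 1 / (n + 1) := by positivity
        rw [Real.norm_eq_abs, abs_of_nonneg (div_nonneg (sq_nonneg _) hd.le),
          div_le_iff₀ hd]
        show v x ^ 2 ≤ |v x| * (|v x| + 1 / (n + 1))
        nlinarith [abs_nonneg (v x), sq_abs (v x),
          mul_nonneg (abs_nonneg (v x)) (hεpos n).le]
      · refine Eventually.of_forall fun x => ?_
        by_cases hv : v x = 0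
        · simp only [hv, abs_zero, ne_eq, OfNat.ofNat_ne_zero, not_false_eq_true,
            zero_pow, zero_div]
          exact tendsto_const_nhds
        · have hv' : (0:ℝ) < |v x| := abs_pos.mpr hv
          have : Tendsto (fun n : ℕ => v x ^ 2 / (|v x| + 1 / (n + 1))) atTop
              (nhds (v x ^ 2 / (|v x| + 0))) :=
            (tendsto_const_nhds.div (tendsto_const_nhds.add hseq) (by positivity))
          convert this using 2
          rw [add_zero, eq_div_iff hv'.ne', ← sq_abs, pow_two]
    have hc : Tendsto (fun n : ℕ => (I + (1 / (n + 1)) * T) / m *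
        ∫ x, v x ^ 2 / (|v x| + 1 / (n + 1)) ∂σ) atTop (nhds ((1 / m) * I ^ 2)) := by
      have h1 : Tendsto (fun n : ℕ => (I + (1 / (n + 1 : ℝ)) * T) / m) atTop
          (nhds ((I + 0 * T) / m)) :=
        (tendsto_const_nhds.add (hseq.mul tendsto_const_nhds)).div_const m
      have := h1.mul hJ
      convert this using 2
      ring
    exact ge_of_tendsto hc (Eventually.of_forall fun n => hb (hmem _ (hεpos n)))
  refine ⟨⟨fun r hr => hlb r hr, fun b hb => hglb2 b hb⟩, ?_⟩
  -- attainment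
  intro hne
  refine ⟨fun x => m / I * |v x|, hvm.abs.const_mul _, ?_, hvint.const_mul _, ?_, ?_, ?_⟩
  · filter_upwards [hne] with x hx
    have : 0 < |v x| := abs_pos.mpr hx
    positivity
  · rw [integral_const_mul, ← hI_def]
    field_simp
  · have heq : (fun x => I / m * |v x|) =ᵐ[σ] fun x => v x ^ 2 / (m / I * |v x|) := by
      filter_upwards [hne] with x hx
      have hv' : (0:ℝ) < |v x| := abs_pos.mpr hx
      have hd : (0:ℝ) < m / I * |v x| := by positivity
      rw [eq_div_iff hd.ne', ← sq_abs (v x)]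
      field_simp [hm.ne', hvpos.ne', sq_abs]
    exact (hvint.const_mul _).congr heq
  · have heq : (fun x => v x ^ 2 / (m / I * |v x|)) =ᵐ[σ] fun x => I / m * |v x| := by
      filter_upwards [hne] with x hx
      have hv' : (0:ℝ) < |v x| := abs_pos.mpr hx
      have hd : (0:ℝ) < m / I * |v x| := by positivity
      rw [div_eq_iff hd.ne', ← sq_abs (v x)]
      field_simp [hm.ne', hvpos.ne', sq_abs]
    rw [integral_congr_ae heq, integral_const_mul, ← hI_def]
    field_simp
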